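/- arXiv:1503.05863 — 2 statements merged into one kernel-verified Lean document; each statement's English description precedes it below -/
import Mathlib

section
/- Let n ≥ 1 and let m > n be a real number. Let χ : ℝ^n → ℝ^n be a measurable bijection with measurable inverse which preserves Lebesgue measure. Let K : ℝ^n × ℝ^n → ℂ be measurable and A ≥ 0 be such that |K(w,z)| ≤ A·(1+|w−χ(z)|²)^{−m/2} for all w, z ∈ ℝ^ن. Then there exists a constant C > 0, depending only on m and n (not on χ, K, A), such that for every p ∈ [1,∞] the integral operator T F(w) = ∫_{ℝ^n} K(w,z) F(z) dz satisfies ‖T F‖_{L^p(ℝ^n)} ≤ C·A·‖F‖_{L^p(ℝ^n)} for every F ∈ L^p(ℝ^n). -/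
open MeasureTheory Complex Real
open scoped ENNReal RealInnerProductSpace

noncomputable section

abbrev E (n : ℕ) : Type := EuclideanSpace ℝ (Fin n)

lemma schur_core {α : Type*} [MeasurableSpace α] {μ : Measure α} [SigmaFinite μ]
    (k : α → α → ℝ≥0∞) (hk : Measurable (Function.uncurry k))
    (h : α → ℝ≥0∞) (hh : Measurable h) (I : ℝ≥0∞) (hItop : I ≠ ∞)
    (hrow : ∀ w, ∫⁻ z, k w z ∂μ = I) (hcol : ∀ z, ∫⁻ w, k w z ∂μ = I)
    {p : ℝ} (hp : 1 ≤ p) :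
    ∫⁻ w, (∫⁻ z, k w z * h z ∂μ) ^ p ∂μ ≤ I ^ p * ∫⁻ z, (h z) ^ p ∂μ := by
  have hksec : ∀ w, Measurable (k w) := fun w => hk.of_uncurry_left
  have swap : ∀ (φ : α → ℝ≥0∞), Measurable φ →
      ∫⁻ w, ∫⁻ z, k w z * φ z ∂μ ∂μ = I * ∫⁻ z, φ z ∂μ := by
    intro φ hφ
    rw [lintegral_lintegral_swap ((hk.mul (hφ.comp measurable_snd)).aemeasurable)]
    have : ∀ z, ∫⁻ w, k w z * φ z ∂μ = I * φ z := by
      intro z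
      rw [lintegral_mul_const _ hk.of_uncurry_right, hcol, mul_comm]
    simp_rw [this]
    rw [lintegral_const_mul _ hφ]
  rcases eq_or_lt_of_le hp with hp1 | hp1
  · subst hp1
    simp only [ENNReal.rpow_one]
    exact le_of_eq (swap h hh)
  · have hq := Real.HolderConjugate.conjExponent hp1
    set q : ℝ := Real.conjExponent p with hqdef
    have hp0 : (0:ℝ) < p := hq.pos
    have key : ∀ w, (∫⁻ z, k w z * h z ∂μ) ≤
        (∫⁻ z, k w z * h z ^ p ∂μ) ^ (1/p) * I ^ (1/q) := by
      intro w
      have hf : AEMeasurable (fun z => (k w z) ^ (1/p) * h z) μ :=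
        (((hksec w).pow measurable_const).mul hh).aemeasurable
      have hg : AEMeasurable (fun z => (k w z) ^ (1/q)) μ :=
        ((hksec w).pow measurable_const).aemeasurable
      have H := ENNReal.lintegral_mul_le_Lp_mul_Lq μ hq hf hg
      have e1 : ∀ z, (k w z) ^ (1/p) * h z * (k w z) ^ (1/q) = k w z * h z := by
        intro z
        have hsum : 1/p + 1/q = 1 := by
          rw [one_div, one_div]; exact Real.HolderConjugate.inv_add_inv_eq_one hq
        rw [mul_right_comm, ← ENNReal.rpow_add_of_nonneg _ _ hq.one_div_nonneg
          hq.symm.one_div_nonneg, hsum, ENNReal.rpow_one]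
      have e2 : ∀ z, ((k w z) ^ (1/p) * h z) ^ p = k w z * h z ^ p := by
        intro z
        rw [ENNReal.mul_rpow_of_nonneg _ _ hp0.le, ← ENNReal.rpow_mul,
          one_div_mul_cancel hp0.ne', ENNReal.rpow_one]
      have e3 : ∀ z, ((k w z) ^ (1/q)) ^ q = k w z := by
        intro z
        rw [← ENNReal.rpow_mul, one_div_mul_cancel hq.symm.ne_zero, ENNReal.rpow_one]
      simp only [Pi.mul_apply] at H
      simp_rw [e1, e2, e3] at H
      rwa [hrow w] at H
    calc ∫⁻ w, (∫⁻ z, k w z * h z ∂μ) ^ p ∂μ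
        ≤ ∫⁻ w, ((∫⁻ z, k w z * h z ^ p ∂μ) ^ (1/p) * I ^ (1/q)) ^ p ∂μ := by
          apply lintegral_mono; intro w
          exact ENNReal.rpow_le_rpow (key w) hp0.le
      _ = ∫⁻ w, (∫⁻ z, k w z * h z ^ p ∂μ) * I ^ (p/q) ∂μ := by
          apply lintegral_congr; intro w
          rw [ENNReal.mul_rpow_of_nonneg _ _ hp0.le, ← ENNReal.rpow_mul,
            one_div_mul_cancel hp0.ne', ENNReal.rpow_one]
          congr 1
          rw [← ENNReal.rpow_mul]
          congr 1
          ring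
      _ = (∫⁻ w, ∫⁻ z, k w z * h z ^ p ∂μ ∂μ) * I ^ (p/q) := by
          exact lintegral_mul_const' _ _ (ENNReal.rpow_ne_top_of_nonneg (div_nonneg hp0.le hq.symm.nonneg) hItop)
      _ = I * (∫⁻ z, (h z) ^ p ∂μ) * I ^ (p/q) := by
          rw [swap _ (hh.pow measurable_const)]
      _ = I ^ p * ∫⁻ z, (h z) ^ p ∂μ := by
          rw [Real.HolderConjugate.div_conj_eq_sub_one hq, mul_right_comm]
          congr 1
          nth_rewrite 2 [show p = 1 + (p - 1) by ring]
          rw [ENNReal.rpow_add_of_nonneg _ _ (by norm_num) (by linarith),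
            ENNReal.rpow_one]


/-- Schur-test boundedness on `L^p(ℝⁿ)`, `1 ≤ p ≤ ∞`, of the integral
operator with kernel `K` satisfying `|K(w,z)| ≤ A·⟨w - χ z⟩^{-m}`, `m > n`, where `χ`
is a measure preserving measurable bijection with measurable inverse. The constant `C`
depends only on `m` and `n`. -/
theorem stmt1 (n : ℕ) (hn : 1 ≤ n) (m : ℝ) (hm : (n : ℝ) < m) :
    ∃ C > (0 : ℝ), ∀ (χ χinv : E n → E n),
      Measurable χ → Measurable χinv →
      Function.LeftInverse χinv χ → Function.RightInverse χinv χ →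
      MeasurePreserving χ volume volume →
      ∀ (K : E n → E n → ℂ), Measurable (Function.uncurry K) →
      ∀ A : ℝ, 0 ≤ A →
      (∀ w z : E n, ‖K w z‖ ≤ A * (1 + ‖w - χ z‖ ^ 2) ^ (-(m / 2))) →
      ∀ p : ℝ≥0∞, 1 ≤ p → ∀ F : E n → ℂ, MemLp F p volume →
        eLpNorm (fun w => ∫ z, K w z * F z) p volume ≤
          ENNReal.ofReal (C * A) * eLpNorm F p volume := by
  classical
  set g0 : E n → ℝ := fun x => (1 + ‖x‖ ^ 2) ^ (-(m / 2)) with hg0def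
  have hg0pos : ∀ x, 0 < g0 x := fun x => Real.rpow_pos_of_pos (by positivity) _
  have hg0cont : Continuous g0 := by
    apply Continuous.rpow_const
    · exact continuous_const.add ((continuous_norm).pow 2)
    · intro x; left; positivity
  set g : E n → ℝ≥0∞ := fun x => ENNReal.ofReal (g0 x) with hgdef
  have hgmeas : Measurable g := ENNReal.measurable_ofReal.comp hg0cont.measurable
  have hint : Integrable g0 (volume : Measure (E n)) := by
    have h1 : (Module.finrank ℝ (E n) : ℝ) < m := by
      simpa [finrank_euclideanSpace_fin] using hm
    have h2 := integrable_rpow_neg_one_add_norm_sq (E := E n) (μ := volume) h1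
    simpa [hg0def, neg_div] using h2
  set I : ℝ≥0∞ := ∫⁻ x, g x with hIdef
  have hIeq : I = ∫⁻ x, (‖g0 x‖₊ : ℝ≥0∞) := by
    apply lintegral_congr
    intro x
    rw [← ENNReal.ofReal_coe_nnreal, coe_nnnorm, Real.norm_of_nonneg (hg0pos x).le]
  have hItop : I ≠ ∞ := by
    rw [hIeq]
    exact hint.hasFiniteIntegral.ne
  have hI0 : I ≠ 0 := by
    intro h0
    have h1 := (lintegral_eq_zero_iff hgmeas).mp h0
    have h2 : volume {x : E n | ¬ g x = 0} = 0 := ae_iff.mp h1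
    have h3 : {x : E n | ¬ g x = 0} = Set.univ := by
      apply Set.eq_univ_of_forall
      intro x
      simp only [Set.mem_setOf_eq, hgdef, ENNReal.ofReal_eq_zero, not_le]
      exact hg0pos x
    rw [h3] at h2
    exact (isOpen_univ.measure_ne_zero (volume : Measure (E n)) Set.univ_nonempty) h2
  refine ⟨I.toReal, ENNReal.toReal_pos hI0 hItop, ?_⟩
  intro χ χinv hχ hχinv hli hri hmp K hK A hA hKb p hp F hF
  -- measurable representative of F
  set F' : E n → ℂ := hF.1.mk F with hF'def
  have hF'meas : Measurable F' := hF.1.stronglyMeasurable_mk.measurable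
  have hFeq : F =ᵐ[volume] F' := hF.1.ae_eq_mk
  set h : E n → ℝ≥0∞ := fun z => (‖F' z‖₊ : ℝ≥0∞) with hhdef
  have hhmeas : Measurable h := hF'meas.nnnorm.coe_nnreal_ennreal
  -- the kernel dominating |K|
  set k : E n → E n → ℝ≥0∞ := fun w z => ENNReal.ofReal A * g (w - χ z) with hkdef
  have hkmeas : Measurable (Function.uncurry k) :=
    measurable_const.mul (hgmeas.comp (measurable_fst.sub (hχ.comp measurable_snd)))
  set J : ℝ≥0∞ := ENNReal.ofReal A * I with hJdef
  have hJtop : J ≠ ∞ := ENNReal.mul_ne_top ENNReal.ofReal_ne_top hItop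
  have hJC : ENNReal.ofReal (I.toReal * A) = J := by
    rw [ENNReal.ofReal_mul ENNReal.toReal_nonneg, ENNReal.ofReal_toReal hItop, hJdef, mul_comm]
  have hrow : ∀ w, ∫⁻ z, k w z = J := by
    intro w
    have h1 : ∫⁻ z, g (w - χ z) = ∫⁻ u, g (w - u) :=
      hmp.lintegral_comp (hgmeas.comp (measurable_const.sub measurable_id))
    have hsl : MeasurePreserving (fun x : E n => w - x) volume volume := by
      have := (measurePreserving_add_left (volume : Measure (E n)) w).comp
        (Measure.measurePreserving_neg (volume : Measure (E n)))
      simpa [Function.comp_def, sub_eq_add_neg] using this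
    have h2 : ∫⁻ u, g (w - u) = I := hsl.lintegral_comp hgmeas
    simp only [hkdef]
    rw [lintegral_const_mul' _ _ ENNReal.ofReal_ne_top, h1, h2]
  have hcol : ∀ z, ∫⁻ w, k w z = J := by
    intro z
    have h2 : ∫⁻ w, g (w - χ z) = I :=
      (measurePreserving_sub_right (volume : Measure (E n)) (χ z)).lintegral_comp hgmeas
    simp only [hkdef]
    rw [lintegral_const_mul' _ _ ENNReal.ofReal_ne_top, h2]
  -- the pointwise bound
  have hTF : ∀ w, (‖∫ z, K w z * F z‖₊ : ℝ≥0∞) ≤ ∫⁻ z, k w z * h z := by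
    intro w
    have e0 : ∫ z, K w z * F z = ∫ z, K w z * F' z :=
      integral_congr_ae (Filter.EventuallyEq.mul Filter.EventuallyEq.rfl hFeq)
    calc (‖∫ z, K w z * F z‖₊ : ℝ≥0∞) = (‖∫ z, K w z * F' z‖₊ : ℝ≥0∞) := by rw [e0]
      _ ≤ ∫⁻ z, (‖K w z * F' z‖₊ : ℝ≥0∞) := enorm_integral_le_lintegral_enorm _
      _ ≤ ∫⁻ z, k w z * h z := by
          apply lintegral_mono
          intro z
          show (‖K w z * F' z‖₊ : ℝ≥0∞) ≤ k w z * h z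
          rw [nnnorm_mul, ENNReal.coe_mul]
          apply mul_le_mul_left
          rw [← ENNReal.ofReal_coe_nnreal, coe_nnnorm]
          calc ENNReal.ofReal ‖K w z‖ ≤ ENNReal.ofReal (A * g0 (w - χ z)) :=
                ENNReal.ofReal_le_ofReal (hKb w z)
            _ = k w z := by rw [ENNReal.ofReal_mul hA]
  rcases eq_or_ne p ∞ with hptop | hptop
  · -- p = ∞
    subst hptop
    have hM : eLpNormEssSup F volume ≠ ∞ := by
      have h2 := hF.2
      rw [eLpNorm_exponent_top] at h2
      exact h2.ne
    have hhb : ∀ᵐ z ∂(volume : Measure (E n)), h z ≤ eLpNormEssSup F volume := by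
      filter_upwards [hFeq, ae_le_eLpNormEssSup (f := F) (μ := (volume : Measure (E n)))]
        with z h1 h2
      show (‖F' z‖₊ : ℝ≥0∞) ≤ eLpNormEssSup F volume
      rw [← h1]
      exact h2
    have hbound : ∀ w, (‖∫ z, K w z * F z‖₊ : ℝ≥0∞) ≤ J * eLpNormEssSup F volume := by
      intro w
      refine (hTF w).trans ?_
      calc ∫⁻ z, k w z * h z ≤ ∫⁻ z, k w z * eLpNormEssSup F volume := by
            apply lintegral_mono_ae
            filter_upwards [hhb] with z hz
            exact mul_le_mul_right hz _
        _ = J * eLpNormEssSup F volume := by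
            rw [lintegral_mul_const' _ _ hM, hrow w]
    rw [eLpNorm_exponent_top, hJC]
    calc eLpNormEssSup (fun w => ∫ z, K w z * F z) volume
        ≤ J * eLpNormEssSup F volume :=
          essSup_le_of_ae_le _ (Filter.Eventually.of_forall hbound)
      _ = J * eLpNorm F ⊤ volume := by rw [eLpNorm_exponent_top]
  · -- p finite
    have hp0 : p ≠ 0 := by
      intro h0; rw [h0] at hp; exact absurd hp (by simp)
    set pr : ℝ := p.toReal with hprdef
    have hpr1 : 1 ≤ pr := by
      rw [hprdef, ← ENNReal.toReal_one]
      exact ENNReal.toReal_mono hptop hp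
    have hpr0 : (0:ℝ) < pr := lt_of_lt_of_le one_pos hpr1
    have hcore := schur_core k hkmeas h hhmeas J hJtop hrow hcol hpr1
      (μ := (volume : Measure (E n)))
    have hFnorm : eLpNorm F p volume = (∫⁻ z, (h z) ^ pr) ^ (1/pr) := by
      rw [eLpNorm_congr_ae hFeq, eLpNorm_eq_lintegral_rpow_enorm_toReal hp0 hptop]; rfl
    rw [eLpNorm_eq_lintegral_rpow_enorm_toReal hp0 hptop, hJC, hFnorm]
    calc (∫⁻ w, (‖∫ z, K w z * F z‖₊ : ℝ≥0∞) ^ pr) ^ (1/pr)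
        ≤ (∫⁻ w, (∫⁻ z, k w z * h z) ^ pr) ^ (1/pr) := by
          apply ENNReal.rpow_le_rpow _ (by positivity)
          apply lintegral_mono
          intro w
          exact ENNReal.rpow_le_rpow (hTF w) hpr0.le
      _ ≤ (J ^ pr * ∫⁻ z, (h z) ^ pr) ^ (1/pr) :=
          ENNReal.rpow_le_rpow hcore (by positivity)
      _ = J * (∫⁻ z, (h z) ^ pr) ^ (1/pr) := by
          rw [ENNReal.mul_rpow_of_nonneg _ _ (by positivity), ← ENNReal.rpow_mul,
            mul_one_div_cancel hpr0.ne', ENNReal.rpow_one]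
end
end

section
/- Let n ≥ 1, m > n a real number, and L > 0. Let χ₁ : ℝ^n → ℝ^n be a Lipschitz bijection with Lipschitz constant L which preserves Lebesgue measure, and let χ₂ : ℝ^n → ℝ^n be any map. Let K₁, K₂ : ℝ^n × ℝ^n → ℂ be measurable with |K₁(w,ζ)| ≤ A·(1+|w−χ₁(ζ)|²)^{−m/2} and |K₂(ζ,z)| ≤ B·(1+|ζ−χ₂(z)|²)^{−m/2} for all points, where A, B ≥ 0. Then there exists a constant C > 0, depending only on m, n and L, such that for all w, z ∈ ℝ^n: ∫_{ℝ^n} |K₁(w,ζ)|·|K₂(ζ,z)| dζ ≤ C·A·B·(1+|w−χ₁(χ₂(z))|²)^{−m/2}. -/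
open MeasureTheory Complex Real
open scoped ENNReal RealInnerProductSpace

noncomputable section

lemma aux_rpow (m : ℝ) (hm : 0 ≤ m) {c x y : ℝ} (hc : 1 ≤ c)
    (h : 1 + x ^ 2 ≤ c ^ 2 * (1 + y ^ 2)) :
    (1 + y ^ 2) ^ (-(m / 2)) ≤ c ^ m * (1 + x ^ 2) ^ (-(m / 2)) := by
  have hc0 : (0 : ℝ) < c := lt_of_lt_of_le one_pos hc
  have hx1 : (0 : ℝ) < 1 + x ^ 2 := by positivity
  have h3 := Real.rpow_le_rpow_of_nonpos hx1 h (by linarith : -(m / 2) ≤ 0)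
  rw [Real.mul_rpow (by positivity) (by positivity)] at h3
  have key : ((c ^ 2 : ℝ)) ^ (m / 2) = c ^ m := by
    rw [← Real.rpow_natCast c 2, ← Real.rpow_mul hc0.le]
    congr 1
    push_cast
    ring
  have h5 : (c ^ 2 : ℝ) ^ (m / 2) * ((c ^ 2) ^ (-(m / 2)) * (1 + y ^ 2) ^ (-(m / 2))) ≤
      (c ^ 2 : ℝ) ^ (m / 2) * (1 + x ^ 2) ^ (-(m / 2)) :=
    mul_le_mul_of_nonneg_left h3 (by positivity)
  rw [← mul_assoc, ← Real.rpow_add (by positivity)] at h5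
  simpa [key] using h5

lemma ptwise (n : ℕ) (m : ℝ) (hm : 0 ≤ m) (a b c : E n) :
    (1 + ‖a - b‖ ^ 2) ^ (-(m / 2)) * (1 + ‖b - c‖ ^ 2) ^ (-(m / 2)) ≤
      (2 : ℝ) ^ m * ((1 + ‖a - c‖ ^ 2) ^ (-(m / 2)) *
        ((1 + ‖a - b‖ ^ 2) ^ (-(m / 2)) + (1 + ‖b - c‖ ^ 2) ^ (-(m / 2)))) := by
  have htri : ‖a - c‖ ≤ ‖a - b‖ + ‖b - c‖ := by
    have : a - c = (a - b) + (b - c) := by abel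
    rw [this]; exact norm_add_le _ _
  have hP : (0 : ℝ) < (1 + ‖a - b‖ ^ 2) ^ (-(m / 2)) := by positivity
  have hQ : (0 : ℝ) < (1 + ‖b - c‖ ^ 2) ^ (-(m / 2)) := by positivity
  have hR : (0 : ℝ) < (1 + ‖a - c‖ ^ 2) ^ (-(m / 2)) := by positivity
  rcases le_total ‖b - c‖ ‖a - b‖ with h | h
  · have h1 : (1 + ‖a - b‖ ^ 2) ^ (-(m / 2)) ≤
        (2 : ℝ) ^ m * (1 + ‖a - c‖ ^ 2) ^ (-(m / 2)) := by
      refine aux_rpow m hm (by norm_num) ?_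
      nlinarith [norm_nonneg (a - b), norm_nonneg (a - c), norm_nonneg (b - c)]
    nlinarith [mul_le_mul_of_nonneg_right h1 hQ.le, mul_pos hR hP,
      mul_pos (mul_pos (Real.rpow_pos_of_pos two_pos m) hR) hP]
  · have h1 : (1 + ‖b - c‖ ^ 2) ^ (-(m / 2)) ≤
        (2 : ℝ) ^ m * (1 + ‖a - c‖ ^ 2) ^ (-(m / 2)) := by
      refine aux_rpow m hm (by norm_num) ?_
      nlinarith [norm_nonneg (a - b), norm_nonneg (a - c), norm_nonneg (b - c)]
    nlinarith [mul_le_mul_of_nonneg_left h1 hP.le, mul_pos hR hQ,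
      mul_pos (mul_pos (Real.rpow_pos_of_pos two_pos m) hR) hQ]

/-- the kernel composition estimate underlying the composition theorem for
the classes `FIO(χ)`: if `|K₁(w,ζ)| ≤ A·⟨w - χ₁ ζ⟩^{-m}` and `|K₂(ζ,z)| ≤ B·⟨ζ - χ₂ z⟩^{-m}`
with `m > n`, `χ₁` a measure preserving Lipschitz bijection with constant `L`, then
`∫ |K₁(w,ζ)|·|K₂(ζ,z)| dζ ≤ C·A·B·⟨w - χ₁(χ₂ z)⟩^{-m}`, with `C` depending only on
`m`, `n`, `L`. -/
theorem stmt3 (n : ℕ) (hn : 1 ≤ n) (m : ℝ) (hm : (n : ℝ) < m) (L : ℝ) (hL : 0 < L) :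
    ∃ C > (0 : ℝ), ∀ (χ₁ : E n → E n), Function.Bijective χ₁ →
      (∀ a b : E n, ‖χ₁ a - χ₁ b‖ ≤ L * ‖a - b‖) →
      MeasurePreserving χ₁ volume volume →
      ∀ (χ₂ : E n → E n) (K₁ K₂ : E n → E n → ℂ),
        Measurable (Function.uncurry K₁) → Measurable (Function.uncurry K₂) →
      ∀ A B : ℝ, 0 ≤ A → 0 ≤ B →
      (∀ w ζ : E n, ‖K₁ w ζ‖ ≤ A * (1 + ‖w - χ₁ ζ‖ ^ 2) ^ (-(m / 2))) →
      (∀ ζ z : E n, ‖K₂ ζ z‖ ≤ B * (1 + ‖ζ - χ₂ z‖ ^ 2) ^ (-(m / 2))) →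
      ∀ w z : E n,
        ∫⁻ ζ, (‖K₁ w ζ‖₊ : ℝ≥0∞) * (‖K₂ ζ z‖₊ : ℝ≥0∞) ≤
          ENNReal.ofReal (C * A * B * (1 + ‖w - χ₁ (χ₂ z)‖ ^ 2) ^ (-(m / 2))) := by
  have hm0 : (0 : ℝ) < m := lt_of_le_of_lt (Nat.cast_nonneg n) hm
  set L' : ℝ := max 1 L with hL'def
  have hL1 : (1 : ℝ) ≤ L' := le_max_left _ _
  have hL'0 : (0 : ℝ) < L' := lt_of_lt_of_le one_pos hL1
  have hInt : Integrable (fun u : E n => ((1 : ℝ) + ‖u‖ ^ 2) ^ (-(m / 2))) := by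
    have h := integrable_rpow_neg_one_add_norm_sq (E := E n) (μ := volume) (r := m)
      (by rw [finrank_euclideanSpace_fin]; exact hm)
    simpa [neg_div] using h
  set I : ℝ := ∫ u : E n, ((1 : ℝ) + ‖u‖ ^ 2) ^ (-(m / 2)) with hIdef
  have hI0 : 0 ≤ I := integral_nonneg fun u => by positivity
  refine ⟨2 * 2 ^ m * L' ^ m * (I + 1), by positivity, ?_⟩
  intro χ₁ hbij hlip hmp χ₂ K₁ K₂ hK₁m hK₂m A B hA hB hb₁ hb₂ w z
  set v : E n := χ₁ (χ₂ z) with hvdef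
  set g : E n → ℝ≥0∞ := fun t => ENNReal.ofReal ((1 + ‖t‖ ^ 2) ^ (-(m / 2))) with hgdef
  have hg_meas : Measurable g := by
    apply Measurable.ennreal_ofReal
    fun_prop
  have hgint : ∫⁻ u : E n, g u = ENNReal.ofReal I := by
    rw [hIdef, ofReal_integral_eq_lintegral_ofReal hInt
      (ae_of_all _ fun u => by positivity)]
  -- measurability of the composed integrand
  have hmw : Measurable (fun u : E n => g (w - u)) :=
    hg_meas.comp (measurable_const.sub measurable_id)
  have hmv : Measurable (fun u : E n => g (u - v)) :=
    hg_meas.comp (measurable_id.sub measurable_const)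
  have hf_meas : Measurable (fun u : E n => g (w - u) * g (u - v)) := hmw.mul hmv
  -- convolution estimate
  have conv : ∫⁻ u : E n, g (w - u) * g (u - v) ≤
      ENNReal.ofReal (2 ^ m) * (g (w - v) * ENNReal.ofReal (2 * I)) := by
    have step1 : ∀ u : E n, g (w - u) * g (u - v) ≤
        ENNReal.ofReal (2 ^ m) * (g (w - v) * (g (w - u) + g (u - v))) := fun u => by
      have hpt := ptwise n m hm0.le w u v
      calc g (w - u) * g (u - v)
          = ENNReal.ofReal ((1 + ‖w - u‖ ^ 2) ^ (-(m / 2)) *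
              (1 + ‖u - v‖ ^ 2) ^ (-(m / 2))) := (ENNReal.ofReal_mul (by positivity)).symm
        _ ≤ ENNReal.ofReal ((2 : ℝ) ^ m * ((1 + ‖w - v‖ ^ 2) ^ (-(m / 2)) *
              ((1 + ‖w - u‖ ^ 2) ^ (-(m / 2)) + (1 + ‖u - v‖ ^ 2) ^ (-(m / 2))))) :=
            ENNReal.ofReal_le_ofReal hpt
        _ = ENNReal.ofReal (2 ^ m) * (g (w - v) * (g (w - u) + g (u - v))) := by
            rw [ENNReal.ofReal_mul (by positivity), ENNReal.ofReal_mul (by positivity),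
              ENNReal.ofReal_add (by positivity) (by positivity)]
    calc ∫⁻ u : E n, g (w - u) * g (u - v)
        ≤ ∫⁻ u : E n, ENNReal.ofReal (2 ^ m) * (g (w - v) * (g (w - u) + g (u - v))) :=
          lintegral_mono step1
      _ = ENNReal.ofReal (2 ^ m) * (g (w - v) * ∫⁻ u : E n, (g (w - u) + g (u - v))) := by
          rw [lintegral_const_mul' _ _ ENNReal.ofReal_ne_top,
            lintegral_const_mul' _ _ ENNReal.ofReal_ne_top]
      _ = ENNReal.ofReal (2 ^ m) * (g (w - v) *
            ((∫⁻ u : E n, g (w - u)) + ∫⁻ u : E n, g (u - v))) := by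
          rw [lintegral_add_left hmw]
      _ = ENNReal.ofReal (2 ^ m) * (g (w - v) * ENNReal.ofReal (2 * I)) := by
          have e1 : ∫⁻ u : E n, g (w - u) = ENNReal.ofReal I := by
            have hrev : ∀ u : E n, g (w - u) = g (u - w) := fun u => by
              simp only [hgdef, norm_sub_rev]
            simp_rw [hrev]
            rw [lintegral_sub_right_eq_self g w, hgint]
          have e2 : ∫⁻ u : E n, g (u - v) = ENNReal.ofReal I := by
            rw [lintegral_sub_right_eq_self g v, hgint]
          rw [e1, e2, ← ENNReal.ofReal_add hI0 hI0, two_mul]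
  -- Lipschitz pointwise bound
  have lipstep : ∀ ζ : E n, g (ζ - χ₂ z) ≤ ENNReal.ofReal (L' ^ m) * g (χ₁ ζ - v) := by
    intro ζ
    have hx : ‖χ₁ ζ - v‖ ≤ L' * ‖ζ - χ₂ z‖ :=
      (hlip ζ (χ₂ z)).trans (mul_le_mul_of_nonneg_right (le_max_right 1 L) (norm_nonneg _))
    have hr : (1 + ‖ζ - χ₂ z‖ ^ 2) ^ (-(m / 2)) ≤
        L' ^ m * (1 + ‖χ₁ ζ - v‖ ^ 2) ^ (-(m / 2)) := by
      refine aux_rpow m hm0.le hL1 ?_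
      nlinarith [norm_nonneg (χ₁ ζ - v), norm_nonneg (ζ - χ₂ z),
        sq_nonneg (‖ζ - χ₂ z‖), mul_le_mul_of_nonneg_left hx (norm_nonneg (χ₁ ζ - v))]
    calc g (ζ - χ₂ z) ≤ ENNReal.ofReal (L' ^ m * (1 + ‖χ₁ ζ - v‖ ^ 2) ^ (-(m / 2))) :=
          ENNReal.ofReal_le_ofReal hr
      _ = ENNReal.ofReal (L' ^ m) * g (χ₁ ζ - v) := ENNReal.ofReal_mul (by positivity)
  -- main chain
  calc ∫⁻ ζ, (‖K₁ w ζ‖₊ : ℝ≥0∞) * (‖K₂ ζ z‖₊ : ℝ≥0∞)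
      ≤ ∫⁻ ζ, (ENNReal.ofReal A * ENNReal.ofReal B) * (g (w - χ₁ ζ) * g (ζ - χ₂ z)) := by
        refine lintegral_mono fun ζ => ?_
        rw [show ((‖K₁ w ζ‖₊ : ℝ≥0∞)) = ENNReal.ofReal ‖K₁ w ζ‖ from (ofReal_norm _).symm,
          show ((‖K₂ ζ z‖₊ : ℝ≥0∞)) = ENNReal.ofReal ‖K₂ ζ z‖ from (ofReal_norm _).symm,
          mul_mul_mul_comm]
        exact mul_le_mul'
          ((ENNReal.ofReal_le_ofReal (hb₁ w ζ)).trans_eq (ENNReal.ofReal_mul hA))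
          ((ENNReal.ofReal_le_ofReal (hb₂ ζ z)).trans_eq (ENNReal.ofReal_mul hB))
    _ = (ENNReal.ofReal A * ENNReal.ofReal B) * ∫⁻ ζ, g (w - χ₁ ζ) * g (ζ - χ₂ z) := by
        rw [lintegral_const_mul' _ _ (ENNReal.mul_ne_top ENNReal.ofReal_ne_top
          ENNReal.ofReal_ne_top)]
    _ ≤ (ENNReal.ofReal A * ENNReal.ofReal B) *
          (ENNReal.ofReal (L' ^ m) * ∫⁻ ζ, g (w - χ₁ ζ) * g (χ₁ ζ - v)) := by
        refine mul_le_mul_right ?_ _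
        calc ∫⁻ ζ, g (w - χ₁ ζ) * g (ζ - χ₂ z)
            ≤ ∫⁻ ζ, ENNReal.ofReal (L' ^ m) * (g (w - χ₁ ζ) * g (χ₁ ζ - v)) := by
              refine lintegral_mono fun ζ => ?_
              calc g (w - χ₁ ζ) * g (ζ - χ₂ z)
                  ≤ g (w - χ₁ ζ) * (ENNReal.ofReal (L' ^ m) * g (χ₁ ζ - v)) :=
                    mul_le_mul_right (lipstep ζ) _
                _ = ENNReal.ofReal (L' ^ m) * (g (w - χ₁ ζ) * g (χ₁ ζ - v)) := by ring
          _ = ENNReal.ofReal (L' ^ m) * ∫⁻ ζ, g (w - χ₁ ζ) * g (χ₁ ζ - v) := by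
              rw [lintegral_const_mul' _ _ ENNReal.ofReal_ne_top]
    _ = (ENNReal.ofReal A * ENNReal.ofReal B) *
          (ENNReal.ofReal (L' ^ m) * ∫⁻ u, g (w - u) * g (u - v)) := by
        rw [hmp.lintegral_comp hf_meas]
    _ ≤ (ENNReal.ofReal A * ENNReal.ofReal B) * (ENNReal.ofReal (L' ^ m) *
          (ENNReal.ofReal (2 ^ m) * (g (w - v) * ENNReal.ofReal (2 * I)))) := by
        exact mul_le_mul_right (mul_le_mul_right conv _) _
    _ ≤ ENNReal.ofReal (2 * 2 ^ m * L' ^ m * (I + 1) * A * B *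
          (1 + ‖w - v‖ ^ 2) ^ (-(m / 2))) := by
        simp only [hgdef]
        rw [← ENNReal.ofReal_mul hA, ← ENNReal.ofReal_mul (by positivity),
          ← ENNReal.ofReal_mul (by positivity), ← ENNReal.ofReal_mul (by positivity),
          ← ENNReal.ofReal_mul (by positivity : (0:ℝ) ≤ A * B)]
        refine ENNReal.ofReal_le_ofReal ?_
        have hX : (0 : ℝ) ≤ (1 + ‖w - v‖ ^ 2) ^ (-(m / 2)) := by positivity
        have h2m : (0 : ℝ) < (2 : ℝ) ^ m := Real.rpow_pos_of_pos two_pos m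
        have hLm : (0 : ℝ) < L' ^ m := Real.rpow_pos_of_pos hL'0 m
        nlinarith [mul_nonneg (mul_nonneg hA hB) (mul_nonneg (mul_nonneg hLm.le h2m.le) hX)]
end
end
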